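/- If a clustered graph (G, V) admits a linear saturation, then so does (G - v, V - v) for any vertex v, where V - v denotes the clustering with v removed from its cluster. -/

import Mathlib

open Set

/-- A planar drawing of a simple graph: vertices map injectively to the plane, each edge
is drawn as an injective continuous arc between its endpoints, arc interiors avoid all
vertices, and interiors of distinct arcs are pairwise disjoint. -/
def IsDrawing {V : Type*} (G : SimpleGraph V) (pos : V → ℝ × ℝ)
    (arc : G.edgeSet → ℝ → ℝ × ℝ) : Prop :=
  Function.Injective pos ∧
  (∀ e : G.edgeSet, ContinuousOn (arc e) (Icc 0 1)) ∧
  (∀ e : G.edgeSet, InjOn (arc e) (Icc 0 1)) ∧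
  (∀ e : G.edgeSet, ∃ u v : V, (e : Sym2 V) = s(u, v) ∧ arc e 0 = pos u ∧ arc e 1 = pos v) ∧
  (∀ e : G.edgeSet, ∀ t ∈ Ioo (0:ℝ) 1, ∀ w : V, arc e t ≠ pos w) ∧
  (∀ e f : G.edgeSet, e ≠ f → ∀ t ∈ Ioo (0:ℝ) 1, ∀ t' ∈ Ioo (0:ℝ) 1, arc e t ≠ arc f t')

/-- A simple graph is planar if it admits a planar drawing. -/
def IsPlanar {V : Type*} (G : SimpleGraph V) : Prop :=
  ∃ pos arc, IsDrawing G pos arc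

/-- The induced subgraph of `H` on `s` is a path: its vertices can be linearly ordered so
that adjacency is exactly consecutiveness. -/
def InducesPath {V : Type*} (H : SimpleGraph V) (s : Set V) : Prop :=
  ∃ (n : ℕ) (f : Fin n ≃ s), ∀ a b : Fin n,
    H.Adj (f a : V) (f b : V) ↔ ((a : ℕ) + 1 = (b : ℕ) ∨ (b : ℕ) + 1 = (a : ℕ))

/-- A clustered graph `(G, c)` admits a linear saturation: a planar supergraph `H` of `G`
whose new (saturating) edges join vertices of the same cluster and in which every cluster
induces a path. -/
def HasLinearSaturation {V ι : Type*} (G : SimpleGraph V) (c : V → ι) : Prop :=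
  ∃ H : SimpleGraph V, G ≤ H ∧ IsPlanar H ∧
    (∀ u v : V, H.Adj u v → ¬ G.Adj u v → c u = c v) ∧
    (∀ i : ι, InducesPath H {v | c v = i})

theorem succAbove_val (n : ℕ) (p : Fin (n+1)) (i : Fin n) :
    ((p.succAbove i : Fin (n+1)) : ℕ) = if (i:ℕ) < (p:ℕ) then (i:ℕ) else (i:ℕ)+1 := by
  rw [Fin.succAbove]
  rcases lt_or_ge (i.castSucc) p with h | h
  · rw [if_pos h, if_pos (by simpa [Fin.lt_def] using h)]; rfl
  · rw [if_neg (not_lt.2 h), if_neg (by simpa [Fin.lt_def, Fin.le_def, not_lt] using h)]; rfl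

def clusterEquiv {V ι : Type*} (c : V → ι) (v : V) (i : ι) (hi : c v ≠ i) :
    {u : V | c u = i} ≃ {x : {u : V | u ≠ v} | c ↑x = i} where
  toFun u := ⟨⟨u, fun h => hi (h ▸ u.2 : c v = i)⟩, u.2⟩
  invFun x := ⟨↑↑x, x.2⟩
  left_inv _ := rfl
  right_inv _ := rfl

theorem pathEquiv {V ι : Type*} (c : V → ι) (v : V) (m : ℕ)
    (f : Fin (m+1) ≃ {u : V | c u = c v}) (k : Fin (m+1)) (hfk : f k = ⟨v, rfl⟩) :
    ∃ g : Fin m ≃ {x : {u : V | u ≠ v} | c ↑x = c v},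
      ∀ j : Fin m, ((g j : {u : V | u ≠ v}) : V)
        = ((f (k.succAbove j) : {u : V | c u = c v}) : V) := by
  have hfval : ∀ j : Fin (m+1), j ≠ k → ((f j : {u : V | c u = c v}) : V) ≠ v := by
    intro j hj hc
    exact hj (f.injective (Subtype.ext hc |>.trans hfk.symm))
  refine ⟨(finSuccAboveEquiv k).trans
    { toFun := fun j => ⟨⟨((f j.1 : {u : V | c u = c v}) : V), hfval j.1 j.2⟩, (f j.1).2⟩
      invFun := fun x => ⟨f.symm ⟨(x.1 : V), x.2⟩, fun hc => x.1.2 (by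
        have h2 := congrArg f hc
        rw [Equiv.apply_symm_apply, hfk] at h2
        exact congrArg Subtype.val h2)⟩
      left_inv := fun j => by
        apply Subtype.ext
        have h3 : (⟨((f j.1 : {u : V | c u = c v}) : V), (f j.1).2⟩ : {u : V | c u = c v})
            = f j.1 := Subtype.ext rfl
        simp only [h3, Equiv.symm_apply_apply]
      right_inv := fun x => by
        apply Subtype.ext; apply Subtype.ext
        simp only [Equiv.apply_symm_apply] }, fun j => rfl⟩

theorem planar_induce {V : Type*} {H : SimpleGraph V} (s : Set V) (h : IsPlanar H) :
    IsPlanar (H.induce s) := by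
  obtain ⟨pos, arc, hinj, hcont, hIoI, hend, havoid, hdisj⟩ := h
  have hmem : ∀ e : (H.induce s).edgeSet, Sym2.map Subtype.val (e : Sym2 s) ∈ H.edgeSet := by
    rintro ⟨e, he⟩
    induction e with
    | _ x y => simpa using he
  set ι : (H.induce s).edgeSet → H.edgeSet := fun e => ⟨_, hmem e⟩ with hι
  have hιinj : Function.Injective ι := by
    rintro e f hef
    have := congrArg Subtype.val hef
    exact Subtype.ext (Sym2.map.injective Subtype.val_injective (by simpa using this))
  refine ⟨pos ∘ Subtype.val, fun e => arc (ι e), hinj.comp Subtype.val_injective,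
    fun e => hcont _, fun e => hIoI _, ?_, fun e t ht w => havoid _ t ht w, ?_⟩
  · rintro ⟨e, he⟩
    induction e with
    | _ x y =>
      obtain ⟨u, w, huw, h0, h1⟩ := hend (ι ⟨s(x, y), he⟩)
      have : s((x:V), (y:V)) = s(u, w) := by simpa [hι] using huw
      rw [Sym2.eq_iff] at this
      rcases this with ⟨hxu, hyw⟩ | ⟨hxw, hyu⟩
      · exact ⟨x, y, rfl, by simp [h0, hxu], by simp [h1, hyw]⟩
      · exact ⟨y, x, Sym2.eq_swap, by simp [h0, ← hyu], by simp [h1, ← hxw]⟩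
  · intro e f hef t ht t' ht'
    exact hdisj _ _ (fun hc => hef (hιinj hc)) t ht t' ht'

theorem planar_delete {V : Type*} {H : SimpleGraph V} (hpl : IsPlanar H) {a b v : V}
    (hav : H.Adj a v) (hvb : H.Adj v b) (hab : a ≠ b) :
    IsPlanar ((H ⊔ SimpleGraph.fromEdgeSet {s(a,b)}).induce {u | u ≠ v}) := by
  obtain ⟨pos, arc, hinj, hcont, hIoI, hend, havoid, hdisj⟩ := hpl
  have hva : v ≠ a := hav.ne'
  have hvb' : v ≠ b := hvb.ne
  set e₁ : H.edgeSet := ⟨s(a,v), hav⟩ with he₁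
  set e₂ : H.edgeSet := ⟨s(v,b), hvb⟩ with he₂
  have he12 : e₁ ≠ e₂ := by
    intro h
    have h' : s(a,v) = s(v,b) := congrArg Subtype.val h
    rw [Sym2.eq_iff] at h'
    rcases h' with ⟨h1, -⟩ | ⟨h1, -⟩
    · exact hva h1.symm
    · exact hab h1
  have orient : ∀ (e : H.edgeSet) (x y : V), (e : Sym2 V) = s(x,y) →
      ∃ A : ℝ → ℝ × ℝ, ContinuousOn A (Icc 0 1) ∧ InjOn A (Icc 0 1) ∧
        A 0 = pos x ∧ A 1 = pos y ∧
        ∀ t ∈ Ioo (0:ℝ) 1, ∃ t' ∈ Ioo (0:ℝ) 1, A t = arc e t' := by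
    intro e x y hxy
    obtain ⟨u, w, huw, h0, h1⟩ := hend e
    rw [hxy, Sym2.eq_iff] at huw
    rcases huw with ⟨rfl, rfl⟩ | ⟨rfl, rfl⟩
    · exact ⟨arc e, hcont e, hIoI e, h0, h1, fun t ht => ⟨t, ht, rfl⟩⟩
    · refine ⟨fun t => arc e (1 - t), ?_, ?_, by simpa using h1, by simpa using h0, ?_⟩
      · exact (hcont e).comp (continuous_const.sub continuous_id).continuousOn
          (fun t ht => ⟨by simpa using ht.2, by simpa using ht.1⟩)
      · intro t ht t' ht' hh
        have := hIoI e ⟨by linarith [ht.1, ht.2], by linarith [ht.1, ht.2]⟩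
          ⟨by linarith [ht'.1, ht'.2], by linarith [ht'.1, ht'.2]⟩ hh
        linarith
      · intro t ht
        exact ⟨1 - t, ⟨by linarith [ht.2], by linarith [ht.1]⟩, rfl⟩
  obtain ⟨A, hAc, hAi, hA0, hA1, hAin⟩ := orient e₁ a v rfl
  obtain ⟨B, hBc, hBi, hB0, hB1, hBin⟩ := orient e₂ v b rfl
  set F : ℝ → ℝ × ℝ := fun t => if t ≤ 1/2 then A (2*t) else B (2*t - 1) with hF
  have hF1 : ∀ t : ℝ, t ≤ 1/2 → F t = A (2*t) := fun t ht => if_pos ht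
  have hF2 : ∀ t : ℝ, ¬ t ≤ 1/2 → F t = B (2*t - 1) := fun t ht => if_neg ht
  have hsetIic : {x : ℝ | x ≤ 1/2} = Iic (1/2) := rfl
  have hFcont : ContinuousOn F (Icc 0 1) := by
    rw [hF]
    apply ContinuousOn.if
    · intro t ht
      have h2 := ht.2
      rw [hsetIic, frontier_Iic] at h2
      rw [mem_singleton_iff] at h2
      subst h2
      norm_num [hA1, hB0]
    · refine (hAc.comp (continuous_const.mul continuous_id).continuousOn ?_)
      rintro t ⟨ht, ht2⟩
      rw [hsetIic, closure_Iic, mem_Iic] at ht2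
      exact ⟨by linarith [ht.1], by linarith⟩
    · refine (hBc.comp ((continuous_const.mul continuous_id).sub continuous_const).continuousOn ?_)
      rintro t ⟨ht, ht2⟩
      have hIoi : {x : ℝ | ¬ x ≤ 1/2} = Ioi (1/2) := by ext x; simp
      rw [hIoi, closure_Ioi, mem_Ici] at ht2
      simp only [id_eq]
      exact ⟨by linarith, by linarith [ht.2]⟩
  have hFin : ∀ t ∈ Ioo (0:ℝ) 1,
      (∃ t' ∈ Ioo (0:ℝ) 1, F t = arc e₁ t') ∨ F t = pos v ∨
      (∃ t' ∈ Ioo (0:ℝ) 1, F t = arc e₂ t') := by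
    intro t ht
    by_cases h : t ≤ 1/2
    · rw [hF1 t h]
      rcases lt_or_eq_of_le h with h' | h'
      · exact Or.inl (hAin (2*t) ⟨by linarith [ht.1], by linarith⟩)
      · subst h'; right; left; norm_num [hA1]
    · rw [hF2 t h]
      push_neg at h
      exact Or.inr (Or.inr (hBin (2*t - 1) ⟨by linarith, by linarith [ht.2]⟩))
  have hposab : pos a ≠ pos b := fun h => hab (hinj h)
  have hposvb : pos v ≠ pos b := fun h => hvb' (hinj h)
  have hposva : pos v ≠ pos a := fun h => hva (hinj h)
  have hcross : ∀ t ∈ Icc (0:ℝ) 1, ∀ t' ∈ Icc (0:ℝ) 1, t ≤ 1/2 → ¬ t' ≤ 1/2 → F t ≠ F t' := by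
    intro t ht t' ht' h h' heq
    rw [hF1 t h, hF2 t' h'] at heq
    push_neg at h'
    have hright : (∃ s₂ ∈ Ioo (0:ℝ) 1, B (2*t'-1) = arc e₂ s₂) ∨ B (2*t'-1) = pos b := by
      rcases lt_or_eq_of_le (by linarith [ht'.2] : 2*t'-1 ≤ 1) with hlt | hE
      · exact Or.inl (hBin _ ⟨by linarith, hlt⟩)
      · rw [hE, hB1]; exact Or.inr rfl
    have hleft : A (2*t) = pos a ∨ (∃ s₁ ∈ Ioo (0:ℝ) 1, A (2*t) = arc e₁ s₁) ∨
        A (2*t) = pos v := by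
      rcases eq_or_lt_of_le ht.1 with h0 | h0
      · left; rw [show (2:ℝ)*t = 0 by linarith [h0]]; exact hA0
      · rcases lt_or_eq_of_le (by linarith : 2*t ≤ 1) with h1 | h1
        · exact Or.inr (Or.inl (hAin _ ⟨by linarith, h1⟩))
        · right; right; rw [h1, hA1]
    rcases hleft with hL | ⟨s₁, hs₁, hL⟩ | hL <;>
      rcases hright with ⟨s₂, hs₂, hR⟩ | hR <;> rw [hL, hR] at heq
    · exact havoid e₂ s₂ hs₂ a heq.symm
    · exact hposab heq
    · exact hdisj e₁ e₂ he12 s₁ hs₁ s₂ hs₂ heq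
    · exact havoid e₁ s₁ hs₁ b heq
    · exact havoid e₂ s₂ hs₂ v heq.symm
    · exact hposvb heq
  have hFinj : InjOn F (Icc 0 1) := by
    intro t ht t' ht' heq
    by_cases h : t ≤ 1/2 <;> by_cases h' : t' ≤ 1/2
    · rw [hF1 t h, hF1 t' h'] at heq
      have := hAi ⟨by linarith [ht.1], by linarith⟩ ⟨by linarith [ht'.1], by linarith⟩ heq
      linarith
    · exact absurd heq (hcross t ht t' ht' h h')
    · exact absurd heq.symm (hcross t' ht' t ht h' h)
    · rw [hF2 t h, hF2 t' h'] at heq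
      push_neg at h h'
      have := hBi ⟨by linarith, by linarith [ht.2]⟩ ⟨by linarith, by linarith [ht'.2]⟩ heq
      linarith
  have hF0 : F 0 = pos a := by rw [hF1 0 (by norm_num)]; norm_num [hA0]
  have hFone : F 1 = pos b := by rw [hF2 1 (by norm_num)]; norm_num [hB1]
  set K := (H ⊔ SimpleGraph.fromEdgeSet {s(a,b)}).induce {u | u ≠ v} with hK
  have hm : ∀ e : K.edgeSet, Sym2.map Subtype.val e.val ∈ H.edgeSet ∨
      Sym2.map Subtype.val e.val = s(a,b) := by
    rintro ⟨e, he⟩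
    induction e with
    | _ x y =>
      have : H.Adj ↑x ↑y ∨ (s((x:V), (y:V)) = s(a,b) ∧ (x:V) ≠ (y:V)) := by
        simpa [hK, SimpleGraph.fromEdgeSet_adj] using he
      rcases this with h | ⟨h, -⟩
      · left; simpa using h
      · right; simpa using h
  have hmapinj : ∀ e f : K.edgeSet,
      Sym2.map Subtype.val e.val = Sym2.map Subtype.val f.val → e = f :=
    fun e f hf => Subtype.ext (Sym2.map.injective Subtype.val_injective hf)
  have hneq12 : ∀ (e : K.edgeSet) (h : Sym2.map Subtype.val e.val ∈ H.edgeSet),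
      (⟨_, h⟩ : H.edgeSet) ≠ e₁ ∧ (⟨_, h⟩ : H.edgeSet) ≠ e₂ := by
    rintro ⟨e, he⟩ h
    induction e with
    | _ x y =>
      constructor <;> intro hc <;>
        (have hc' := congrArg Subtype.val hc;
         simp only [he₁, he₂, Sym2.map_pair_eq, Sym2.eq_iff] at hc')
      · rcases hc' with ⟨-, h2⟩ | ⟨h1, -⟩
        · exact y.2 h2
        · exact x.2 h1
      · rcases hc' with ⟨h1, -⟩ | ⟨-, h2⟩
        · exact x.2 h1
        · exact y.2 h2
  have hFold : ∀ (E : H.edgeSet), E ≠ e₁ → E ≠ e₂ →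
      ∀ t ∈ Ioo (0:ℝ) 1, ∀ t' ∈ Ioo (0:ℝ) 1, F t ≠ arc E t' := by
    intro E h1 h2 t ht t' ht' heq
    rcases hFin t ht with ⟨s₁, hs₁, hE⟩ | hE | ⟨s₂, hs₂, hE⟩ <;> rw [hE] at heq
    · exact hdisj e₁ E (Ne.symm h1) s₁ hs₁ t' ht' heq
    · exact havoid E t' ht' v heq.symm
    · exact hdisj e₂ E (Ne.symm h2) s₂ hs₂ t' ht' heq
  have hFavoid : ∀ t ∈ Ioo (0:ℝ) 1, ∀ w : {u : V | u ≠ v}, F t ≠ pos ↑w := by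
    intro t ht w heq
    rcases hFin t ht with ⟨s₁, hs₁, hE⟩ | hE | ⟨s₂, hs₂, hE⟩ <;> rw [hE] at heq
    · exact havoid e₁ s₁ hs₁ ↑w heq
    · exact w.2 (hinj heq).symm
    · exact havoid e₂ s₂ hs₂ ↑w heq
  classical
  refine ⟨pos ∘ Subtype.val,
    fun e => if h : Sym2.map Subtype.val e.val ∈ H.edgeSet then arc ⟨_, h⟩ else F,
    hinj.comp Subtype.val_injective, ?_, ?_, ?_, ?_, ?_⟩
  · intro e
    by_cases h : Sym2.map Subtype.val e.val ∈ H.edgeSet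
    · simp only [dif_pos h]; exact hcont _
    · simp only [dif_neg h]; exact hFcont
  · intro e
    by_cases h : Sym2.map Subtype.val e.val ∈ H.edgeSet
    · simp only [dif_pos h]; exact hIoI _
    · simp only [dif_neg h]; exact hFinj
  · rintro ⟨e, he⟩
    induction e with
    | _ x y =>
      by_cases h : Sym2.map Subtype.val (⟨s(x,y), he⟩ : K.edgeSet).val ∈ H.edgeSet
      · obtain ⟨u, w, huw, h0, h1⟩ := hend ⟨_, h⟩
        simp only [dif_pos h]
        have : s((x:V), (y:V)) = s(u, w) := by simpa using huw
        rw [Sym2.eq_iff] at this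
        rcases this with ⟨hxu, hyw⟩ | ⟨hxw, hyu⟩
        · exact ⟨x, y, rfl, by rw [h0]; simp [hxu], by rw [h1]; simp [hyw]⟩
        · exact ⟨y, x, Sym2.eq_swap, by rw [h0]; simp [hyu], by rw [h1]; simp [hxw]⟩
      · have hab' := (hm ⟨s(x,y), he⟩).resolve_left h
        simp only [dif_neg h]
        have : s((x:V), (y:V)) = s(a, b) := by simpa using hab'
        rw [Sym2.eq_iff] at this
        rcases this with ⟨hxa, hyb⟩ | ⟨hxb, hya⟩
        · exact ⟨x, y, rfl, by rw [hF0]; simp [hxa], by rw [hFone]; simp [hyb]⟩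
        · exact ⟨y, x, Sym2.eq_swap, by rw [hF0]; simp [hya], by rw [hFone]; simp [hxb]⟩
  · intro e t ht w
    by_cases h : Sym2.map Subtype.val e.val ∈ H.edgeSet
    · simp only [dif_pos h]; exact havoid _ t ht ↑w
    · simp only [dif_neg h]; exact hFavoid t ht w
  · intro e f hef t ht t' ht'
    by_cases h : Sym2.map Subtype.val e.val ∈ H.edgeSet <;>
      by_cases h' : Sym2.map Subtype.val f.val ∈ H.edgeSet
    · simp only [dif_pos h, dif_pos h']
      refine hdisj ⟨_, h⟩ ⟨_, h'⟩ (fun hc => hef (hmapinj e f ?_)) t ht t' ht'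
      exact congrArg Subtype.val hc
    · simp only [dif_pos h, dif_neg h']
      exact (hFold ⟨_, h⟩ (hneq12 e h).1 (hneq12 e h).2 t' ht' t ht).symm
    · simp only [dif_neg h, dif_pos h']
      exact hFold ⟨_, h'⟩ (hneq12 f h').1 (hneq12 f h').2 t ht t' ht'
    · exact absurd (hmapinj e f (((hm e).resolve_left h).trans
        ((hm f).resolve_left h').symm)) hef


/-- Yes-instances of CPLS are closed under vertex deletion: if `(G, c)` admits a linear
saturation, then so does `(G - v, c - v)`. -/
theorem stmt17 {V ι : Type*} (G : SimpleGraph V) (c : V → ι) (v : V)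
    (h : HasLinearSaturation G c) :
    HasLinearSaturation (G.induce {u | u ≠ v}) (fun u => c u) := by
  classical
  obtain ⟨H, hGH, hpl, hsat, hpaths⟩ := h
  obtain ⟨n, f, hf⟩ := hpaths (c v)
  cases n with
  | zero => exact (f.symm ⟨v, rfl⟩).elim0
  | succ m =>
  set k : Fin (m+1) := f.symm ⟨v, rfl⟩ with hk
  have hfk : f k = ⟨v, rfl⟩ := by rw [hk, Equiv.apply_symm_apply]
  obtain ⟨g, hg⟩ := pathEquiv c v m f k hfk
  have hval : ∀ p q : Fin (m+1), ((f p : {u : V | c u = c v}) : V) = ↑(f q) ↔ p = q :=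
    fun p q => ⟨fun hh => f.injective (Subtype.ext hh), fun hh => by rw [hh]⟩
  by_cases hint : 0 < (k:ℕ) ∧ (k:ℕ) < m
  · -- v is interior in its cluster path
    set p1 : Fin (m+1) := ⟨(k:ℕ)-1, by omega⟩ with hp1
    set p2 : Fin (m+1) := ⟨(k:ℕ)+1, by omega⟩ with hp2
    have hp1v : (p1:ℕ) = (k:ℕ)-1 := rfl
    have hp2v : (p2:ℕ) = (k:ℕ)+1 := rfl
    set a : {u : V | c u = c v} := f p1 with ha
    set b : {u : V | c u = c v} := f p2 with hb
    have hHa : H.Adj ↑a v := by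
      have h1 := (hf p1 k).2 (Or.inl (by rw [hp1v]; omega))
      rwa [hfk] at h1
    have hHb : H.Adj v ↑b := by
      have h1 := (hf k p2).2 (Or.inl (by rw [hp2v]))
      rwa [hfk] at h1
    have hab : (↑a : V) ≠ ↑b := by
      intro hh
      have h0 : p1 = p2 := f.injective (Subtype.ext hh)
      have h2 := congrArg Fin.val h0
      rw [hp1v, hp2v] at h2
      omega
    refine ⟨(H ⊔ SimpleGraph.fromEdgeSet {s((↑a : V), ↑b)}).induce {u | u ≠ v},
      ?_, planar_delete hpl hHa hHb hab, ?_, ?_⟩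
    · intro x y hxy
      have hxy' : G.Adj ↑x ↑y := by simpa using hxy
      show (H ⊔ SimpleGraph.fromEdgeSet {s((↑a : V), ↑b)}).Adj ↑x ↑y
      exact Or.inl (hGH hxy')
    · intro x y hxy hnxy
      have hxy' : H.Adj ↑x ↑y ∨ (s((↑x : V), ↑y) = s((↑a : V), ↑b) ∧ (↑x : V) ≠ ↑y) := by
        simpa [SimpleGraph.fromEdgeSet_adj] using hxy
      rcases hxy' with hh | ⟨hh, -⟩
      · exact hsat ↑x ↑y hh (fun hA => hnxy (by simpa using hA))
      · rw [Sym2.eq_iff] at hh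
        rcases hh with ⟨h1, h2⟩ | ⟨h1, h2⟩
        · show c ↑x = c ↑y
          rw [h1, h2, a.2, b.2]
        · show c ↑x = c ↑y
          rw [h1, h2, a.2, b.2]
    · intro i
      have hH₂ : ∀ x y : {u : V | u ≠ v},
          ((H ⊔ SimpleGraph.fromEdgeSet {s((↑a : V), ↑b)}).induce {u | u ≠ v}).Adj x y ↔
            (H.Adj ↑x ↑y ∨ (((↑x : V) = ↑a ∧ (↑y : V) = ↑b) ∨ ((↑x : V) = ↑b ∧ (↑y : V) = ↑a))) := by
        intro x y
        constructor
        · intro hh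
          rcases (by simpa [SimpleGraph.fromEdgeSet_adj] using hh :
              H.Adj ↑x ↑y ∨ (s((↑x:V), ↑y) = s((↑a:V), ↑b) ∧ (↑x:V) ≠ ↑y)) with h1 | ⟨h1, -⟩
          · exact Or.inl h1
          · exact Or.inr (by rwa [Sym2.eq_iff] at h1)
        · rintro (h1 | h1)
          · show (H ⊔ _).Adj ↑x ↑y
            exact Or.inl h1
          · show (H ⊔ SimpleGraph.fromEdgeSet {s((↑a : V), ↑b)}).Adj ↑x ↑y
            refine Or.inr ?_
            rw [SimpleGraph.fromEdgeSet_adj]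
            refine ⟨by rw [mem_singleton_iff, Sym2.eq_iff]; exact h1, ?_⟩
            rcases h1 with ⟨h1, h2⟩ | ⟨h1, h2⟩
            · rw [h1, h2]; exact hab
            · rw [h1, h2]; exact hab.symm
      by_cases hi : c v = i
      · subst hi
        refine ⟨m, g, fun a' b' => ?_⟩
        rw [hH₂, hg a', hg b']
        have hva : ∀ j : Fin m,
            (((f (k.succAbove j)) : {u : V | c u = c v}) : V) = ↑a ↔ k.succAbove j = p1 :=
          fun j => by rw [ha]; exact hval _ _
        have hvb : ∀ j : Fin m,
            (((f (k.succAbove j)) : {u : V | c u = c v}) : V) = ↑b ↔ k.succAbove j = p2 :=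
          fun j => by rw [hb]; exact hval _ _
        rw [hf, hva a', hva b', hvb a', hvb b']
        simp only [Fin.ext_iff, succAbove_val, hp1v, hp2v]
        have ha' := a'.isLt; have hb' := b'.isLt
        obtain ⟨hk1, hk2⟩ := hint
        split_ifs <;> omega
      · obtain ⟨ni, fi, hfi⟩ := hpaths i
        refine ⟨ni, fi.trans (clusterEquiv c v i hi), fun a' b' => ?_⟩
        rw [hH₂]
        constructor
        · rintro (h1 | ⟨h1, -⟩ | ⟨-, h1⟩)
          · exact (hfi a' b').1 h1
          · exfalso
            have h3 : c (↑a : V) = i := by rw [← h1]; exact (fi a').2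
            exact hi (a.2.symm.trans h3)
          · exfalso
            have h3 : c (↑a : V) = i := by rw [← h1]; exact (fi b').2
            exact hi (a.2.symm.trans h3)
        · intro hc
          exact Or.inl ((hfi a' b').2 hc)
  · -- v is an endpoint (or its cluster is a singleton)
    refine ⟨H.induce {u | u ≠ v}, ?_, planar_induce _ hpl, ?_, ?_⟩
    · intro x y hxy
      exact hGH (by simpa using hxy)
    · intro x y hxy hnxy
      exact hsat ↑x ↑y (by simpa using hxy) (fun hA => hnxy (by simpa using hA))
    · intro i
      have hH₂ : ∀ x y : {u : V | u ≠ v},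
          (H.induce {u | u ≠ v}).Adj x y ↔ H.Adj ↑x ↑y := fun x y => by simp
      by_cases hi : c v = i
      · subst hi
        refine ⟨m, g, fun a' b' => ?_⟩
        rw [hH₂, hg a', hg b', hf]
        rw [succAbove_val, succAbove_val]
        have ha' := a'.isLt; have hb' := b'.isLt
        have hkm := k.isLt
        push_neg at hint
        split_ifs <;> omega
      · obtain ⟨ni, fi, hfi⟩ := hpaths i
        refine ⟨ni, fi.trans (clusterEquiv c v i hi), fun a' b' => ?_⟩
        rw [hH₂]
        exact hfi a' b'
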